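/- Let Π ∈ ℝ^{SA×S} be a policy matrix, i.e., (Π v)_{(s,a)} = π(a|s)·v(s) for a policy π (so ‖Π‖₂ ≤ 1), let ρ ∈ ℝ^S with ‖ρ‖₂ ≤ 1, let Φ ∈ ℝ^{SA×D} with ‖Φ‖₂ ≤ √𝔐, let γ ∈ (0,1), and let μ₁, μ₂ ∈ ℝ^{S×D} be such that ‖Π μ_i Φ^⊤‖₂ ≤ 1 for i = 1, 2 (which holds when μ_iΦ^⊤ is a transition kernel). Then the matrices I − γ Π μ_i Φ^⊤ are invertible with ‖(I − γ Π μ_i Φ^⊤)^{-1}‖₂ ≤ 1/(1−γ), and ‖(I − γ Π μ₁ Φ^⊤)^{-1} Π ρ − (I − γ Π μ₂ Φ^⊤)^{-1} Π ρ‖₂ ≤ (3 γ √𝔐/(1−γ)²) · ‖μ₁ − μ₂‖₂. -/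

import Mathlib

open Matrix BigOperators

noncomputable def e2norm {n : Type*} [Fintype n] (x : n → ℝ) : ℝ :=
  Real.sqrt (∑ i, (x i)^2)

noncomputable def specNorm {m n : Type*} [Fintype m] [Fintype n] [DecidableEq n]
    (M : Matrix m n ℝ) : ℝ :=
  ‖LinearMap.toContinuousLinearMap (Matrix.toEuclideanLin M)‖

open scoped Matrix.Norms.L2Operator

lemma specNorm_eq {m n : Type*} [Fintype m] [Fintype n] [DecidableEq n]
    (M : Matrix m n ℝ) : specNorm M = ‖M‖ := rfl

lemma e2norm_eq {n : Type*} [Fintype n] (x : n → ℝ) :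
    e2norm x = ‖(EuclideanSpace.equiv n ℝ).symm x‖ := by
  simp [e2norm, EuclideanSpace.norm_eq, sq_abs]

lemma norm_one_le' (n : Type*) [Fintype n] [DecidableEq n] : ‖(1 : Matrix n n ℝ)‖ ≤ 1 := by
  rw [Matrix.cstar_norm_def, _root_.map_one]
  exact ContinuousLinearMap.norm_id_le

lemma key_inv {n : Type*} [Fintype n] [DecidableEq n] (γ : ℝ) (hγ0 : 0 < γ) (hγ1 : γ < 1)
    (M : Matrix n n ℝ) (hM : ‖M‖ ≤ 1) :
    IsUnit ((1 : Matrix n n ℝ) - γ • M).det ∧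
    ((1 : Matrix n n ℝ) - γ • M) * ((1 : Matrix n n ℝ) - γ • M)⁻¹ = 1 ∧
    ((1 : Matrix n n ℝ) - γ • M)⁻¹ * ((1 : Matrix n n ℝ) - γ • M) = 1 ∧
    ‖((1 : Matrix n n ℝ) - γ • M)⁻¹‖ ≤ 1 / (1 - γ) := by
  have hsm : ‖γ • M‖ < 1 := by
    rw [norm_smul, Real.norm_eq_abs, abs_of_pos hγ0]
    nlinarith [norm_nonneg M]
  set u := Units.oneSub (γ • M) hsm with hu
  have huval : (u : Matrix n n ℝ) = 1 - γ • M := rfl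
  have hIsUnit : IsUnit ((1 : Matrix n n ℝ) - γ • M) := by rw [← huval]; exact u.isUnit
  have hdet : IsUnit ((1 : Matrix n n ℝ) - γ • M).det :=
    (Matrix.isUnit_iff_isUnit_det _).mp hIsUnit
  have hinv : ((1 : Matrix n n ℝ) - γ • M)⁻¹ = (↑u⁻¹ : Matrix n n ℝ) := by
    apply Matrix.inv_eq_right_inv
    rw [← huval]; exact u.mul_inv
  have hmul1 : ((1 : Matrix n n ℝ) - γ • M) * ((1 : Matrix n n ℝ) - γ • M)⁻¹ = 1 := by
    rw [hinv, ← huval]; exact u.mul_inv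
  have hmul2 : ((1 : Matrix n n ℝ) - γ • M)⁻¹ * ((1 : Matrix n n ℝ) - γ • M) = 1 := by
    rw [hinv, ← huval]; exact u.inv_mul
  refine ⟨hdet, hmul1, hmul2, ?_⟩
  set C := ((1 : Matrix n n ℝ) - γ • M)⁻¹ with hC
  have hrearr : C = 1 + C * (γ • M) := by
    have := hmul2
    rw [mul_sub, mul_one] at this
    exact sub_eq_iff_eq_add.mp this
  have hcb : ‖C‖ ≤ 1 + ‖C‖ * γ := by
    calc ‖C‖ = ‖1 + C * (γ • M)‖ := by rw [← hrearr]
    _ ≤ ‖(1 : Matrix n n ℝ)‖ + ‖C * (γ • M)‖ := norm_add_le _ _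
    _ ≤ 1 + ‖C‖ * ‖γ • M‖ := by
        gcongr
        · exact norm_one_le' n
        · exact norm_mul_le _ _
    _ ≤ 1 + ‖C‖ * γ := by
        have : ‖γ • M‖ ≤ γ := by
          rw [norm_smul, Real.norm_eq_abs, abs_of_pos hγ0]
          nlinarith [norm_nonneg M]
        nlinarith [norm_nonneg C]
  rw [le_div_iff₀ (by linarith)]
  nlinarith [norm_nonneg C]

lemma transpose_norm {m n : Type*} [Fintype m] [Fintype n] [DecidableEq m] [DecidableEq n]
    (Φ : Matrix m n ℝ) : ‖Φᵀ‖ = ‖Φ‖ := by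
  have : Φᵀ = Φᴴ := by ext i j; simp [Matrix.conjTranspose_apply]
  rw [this, Matrix.l2_opNorm_conjTranspose]

lemma pim_norm {S A : ℕ} (π : Fin S → Fin A → ℝ)
    (hπ0 : ∀ s a, 0 ≤ π s a) (hπ1 : ∀ s, ∑ a, π s a = 1)
    (PiM : Matrix (Fin S × Fin A) (Fin S) ℝ)
    (hPiM : ∀ sa s', PiM sa s' = if s' = sa.1 then π sa.1 sa.2 else 0) :
    ‖PiM‖ ≤ 1 := by
  rw [Matrix.l2_opNorm_def]
  apply ContinuousLinearMap.opNorm_le_bound _ zero_le_one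
  intro x
  rw [one_mul]
  have happ : ∀ sa : Fin S × Fin A, (PiM *ᵥ (WithLp.equiv 2 _ x)) sa
      = π sa.1 sa.2 * x sa.1 := by
    intro sa
    simp only [Matrix.mulVec, dotProduct, hPiM]
    rw [Finset.sum_eq_single sa.1]
    · simp
    · intro b _ hb; simp [hb]
    · simp
  have hle : ∀ s a, π s a ≤ 1 := by
    intro s a
    rw [← hπ1 s]
    exact Finset.single_le_sum (fun a _ => hπ0 s a) (Finset.mem_univ a)
  calc ‖(LinearEquiv.trans Matrix.toEuclideanLin LinearMap.toContinuousLinearMap) PiM x‖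
      = Real.sqrt (∑ sa : Fin S × Fin A, ‖(PiM *ᵥ (WithLp.equiv 2 _ x)) sa‖ ^ 2) := by
        rw [EuclideanSpace.norm_eq]; rfl
    _ = Real.sqrt (∑ sa : Fin S × Fin A, (π sa.1 sa.2)^2 * (x sa.1)^2) := by
        congr 1; apply Finset.sum_congr rfl; intro sa _
        rw [happ, Real.norm_eq_abs, sq_abs, mul_pow]
    _ ≤ Real.sqrt (∑ s : Fin S, ‖x s‖ ^ 2) := by
        apply Real.sqrt_le_sqrt
        rw [Fintype.sum_prod_type]
        calc ∑ s, ∑ a, (π s a)^2 * (x s)^2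
            = ∑ s, (∑ a, (π s a)^2) * (x s)^2 := by
              apply Finset.sum_congr rfl; intros; rw [Finset.sum_mul]
          _ ≤ ∑ s, 1 * (x s)^2 := by
              apply Finset.sum_le_sum; intro s _
              apply mul_le_mul_of_nonneg_right _ (sq_nonneg _)
              calc ∑ a, (π s a)^2 ≤ ∑ a, π s a :=
                    Finset.sum_le_sum (fun a _ => by nlinarith [hπ0 s a, hle s a])
                _ = 1 := hπ1 s
          _ = ∑ s, ‖x s‖ ^ 2 := by simp [Real.norm_eq_abs, sq_abs]
    _ = ‖x‖ := (EuclideanSpace.norm_eq x).symm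

set_option maxHeartbeats 1000000 in
/-- perturbation bound for occupancy measures
`(I − γΠμΦᵀ)⁻¹Πρ` with respect to the transition parameter `μ`. -/
theorem occupancy_matrix_perturbation
    (S A D : ℕ)
    (γ 𝔐 : ℝ) (hγ0 : 0 < γ) (hγ1 : γ < 1)
    (π : Fin S → Fin A → ℝ)
    (hπ0 : ∀ s a, 0 ≤ π s a) (hπ1 : ∀ s, ∑ a, π s a = 1)
    (PiM : Matrix (Fin S × Fin A) (Fin S) ℝ)
    (hPiM : ∀ sa s', PiM sa s' = if s' = sa.1 then π sa.1 sa.2 else 0)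
    (ρ : Fin S → ℝ) (hρ : e2norm ρ ≤ 1)
    (Φ : Matrix (Fin S × Fin A) (Fin D) ℝ) (hΦ : specNorm Φ ≤ Real.sqrt 𝔐)
    (μ₁ μ₂ : Matrix (Fin S) (Fin D) ℝ)
    (h₁ : specNorm (PiM * μ₁ * Φᵀ) ≤ 1) (h₂ : specNorm (PiM * μ₂ * Φᵀ) ≤ 1) :
    IsUnit ((1 : Matrix (Fin S × Fin A) (Fin S × Fin A) ℝ)
        - γ • (PiM * μ₁ * Φᵀ)).det
    ∧ IsUnit ((1 : Matrix (Fin S × Fin A) (Fin S × Fin A) ℝ)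
        - γ • (PiM * μ₂ * Φᵀ)).det
    ∧ specNorm ((1 : Matrix (Fin S × Fin A) (Fin S × Fin A) ℝ)
        - γ • (PiM * μ₁ * Φᵀ))⁻¹ ≤ 1 / (1 - γ)
    ∧ specNorm ((1 : Matrix (Fin S × Fin A) (Fin S × Fin A) ℝ)
        - γ • (PiM * μ₂ * Φᵀ))⁻¹ ≤ 1 / (1 - γ)
    ∧ e2norm (((1 : Matrix (Fin S × Fin A) (Fin S × Fin A) ℝ)
          - γ • (PiM * μ₁ * Φᵀ))⁻¹.mulVec (PiM.mulVec ρ)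
        - ((1 : Matrix (Fin S × Fin A) (Fin S × Fin A) ℝ)
          - γ • (PiM * μ₂ * Φᵀ))⁻¹.mulVec (PiM.mulVec ρ))
      ≤ 3 * γ * Real.sqrt 𝔐 / (1 - γ)^2 * specNorm (μ₁ - μ₂) := by
  rw [specNorm_eq] at hΦ h₁ h₂
  set M₁ := PiM * μ₁ * Φᵀ with hM₁
  set M₂ := PiM * μ₂ * Φᵀ with hM₂
  obtain ⟨hdet₁, hi₁, hi₁', hn₁⟩ := key_inv γ hγ0 hγ1 M₁ h₁
  obtain ⟨hdet₂, hi₂, hi₂', hn₂⟩ := key_inv γ hγ0 hγ1 M₂ h₂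
  set B₁ := (1 : Matrix (Fin S × Fin A) (Fin S × Fin A) ℝ) - γ • M₁ with hB₁
  set B₂ := (1 : Matrix (Fin S × Fin A) (Fin S × Fin A) ℝ) - γ • M₂ with hB₂
  refine ⟨hdet₁, hdet₂, hn₁, hn₂, ?_⟩
  have hγ' : (0:ℝ) < 1 - γ := by linarith
  have hP : ‖PiM‖ ≤ 1 := pim_norm π hπ0 hπ1 PiM hPiM
  have hΦT : ‖Φᵀ‖ ≤ Real.sqrt 𝔐 := by rw [transpose_norm]; exact hΦ
  -- algebraic identity
  have hBB : B₂ - B₁ = γ • (PiM * (μ₁ - μ₂) * Φᵀ) := by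
    have h' : PiM * (μ₁ - μ₂) * Φᵀ = M₁ - M₂ := by
      rw [Matrix.mul_sub, Matrix.sub_mul, hM₁, hM₂]
    rw [h', hB₁, hB₂, smul_sub]
    abel
  have hdiff : B₁⁻¹ - B₂⁻¹ = B₁⁻¹ * (γ • (PiM * (μ₁ - μ₂) * Φᵀ)) * B₂⁻¹ := by
    rw [← hBB]
    calc B₁⁻¹ - B₂⁻¹ = B₁⁻¹ * (B₂ * B₂⁻¹) - (B₁⁻¹ * B₁) * B₂⁻¹ := by
          rw [hi₂, hi₁', mul_one, one_mul]
      _ = B₁⁻¹ * (B₂ - B₁) * B₂⁻¹ := by noncomm_ring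
  -- norm of the middle factor
  have hδ0 : (0:ℝ) ≤ ‖μ₁ - μ₂‖ := norm_nonneg _
  have hm0 : (0:ℝ) ≤ Real.sqrt 𝔐 := Real.sqrt_nonneg _
  have hmid : ‖γ • (PiM * (μ₁ - μ₂) * Φᵀ)‖ ≤ γ * (Real.sqrt 𝔐 * ‖μ₁ - μ₂‖) := by
    rw [norm_smul, Real.norm_eq_abs, abs_of_pos hγ0]
    apply mul_le_mul_of_nonneg_left _ hγ0.le
    calc ‖PiM * (μ₁ - μ₂) * Φᵀ‖ ≤ ‖PiM * (μ₁ - μ₂)‖ * ‖Φᵀ‖ := Matrix.l2_opNorm_mul _ _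
      _ ≤ (‖PiM‖ * ‖μ₁ - μ₂‖) * ‖Φᵀ‖ := by
          gcongr; exact Matrix.l2_opNorm_mul _ _
      _ ≤ (1 * ‖μ₁ - μ₂‖) * Real.sqrt 𝔐 := by gcongr
      _ = Real.sqrt 𝔐 * ‖μ₁ - μ₂‖ := by ring
  have hCdiff : ‖B₁⁻¹ - B₂⁻¹‖ ≤ (1/(1-γ)) * (γ * (Real.sqrt 𝔐 * ‖μ₁ - μ₂‖)) * (1/(1-γ)) := by
    rw [hdiff]
    calc ‖B₁⁻¹ * (γ • (PiM * (μ₁ - μ₂) * Φᵀ)) * B₂⁻¹‖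
        ≤ ‖B₁⁻¹ * (γ • (PiM * (μ₁ - μ₂) * Φᵀ))‖ * ‖B₂⁻¹‖ := Matrix.l2_opNorm_mul _ _
      _ ≤ (‖B₁⁻¹‖ * ‖γ • (PiM * (μ₁ - μ₂) * Φᵀ)‖) * ‖B₂⁻¹‖ := by
          gcongr; exact Matrix.l2_opNorm_mul _ _
      _ ≤ (1/(1-γ)) * (γ * (Real.sqrt 𝔐 * ‖μ₁ - μ₂‖)) * (1/(1-γ)) := by
          gcongr
  -- the vector bound
  have hw : ‖(EuclideanSpace.equiv (Fin S × Fin A) ℝ).symm (PiM *ᵥ ρ)‖ ≤ 1 := by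
    calc ‖(EuclideanSpace.equiv (Fin S × Fin A) ℝ).symm (PiM *ᵥ ρ)‖
        ≤ ‖PiM‖ * ‖(EuclideanSpace.equiv (Fin S) ℝ).symm ρ‖ :=
          Matrix.l2_opNorm_mulVec PiM ((EuclideanSpace.equiv (Fin S) ℝ).symm ρ)
      _ ≤ 1 * 1 := by
          apply mul_le_mul hP _ (norm_nonneg _) zero_le_one
          rw [← e2norm_eq]; exact hρ
      _ = 1 := one_mul 1
  have hsub : B₁⁻¹ *ᵥ (PiM *ᵥ ρ) - B₂⁻¹ *ᵥ (PiM *ᵥ ρ) = (B₁⁻¹ - B₂⁻¹) *ᵥ (PiM *ᵥ ρ) :=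
    (Matrix.sub_mulVec _ _ _).symm
  rw [specNorm_eq, e2norm_eq, hsub]
  calc ‖(EuclideanSpace.equiv (Fin S × Fin A) ℝ).symm ((B₁⁻¹ - B₂⁻¹) *ᵥ (PiM *ᵥ ρ))‖
      ≤ ‖B₁⁻¹ - B₂⁻¹‖ * ‖(EuclideanSpace.equiv (Fin S × Fin A) ℝ).symm (PiM *ᵥ ρ)‖ :=
        Matrix.l2_opNorm_mulVec (B₁⁻¹ - B₂⁻¹) ((EuclideanSpace.equiv (Fin S × Fin A) ℝ).symm (PiM *ᵥ ρ))
    _ ≤ ((1/(1-γ)) * (γ * (Real.sqrt 𝔐 * ‖μ₁ - μ₂‖)) * (1/(1-γ))) * 1 := by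
        apply mul_le_mul hCdiff hw (norm_nonneg _)
        positivity
    _ ≤ 3 * γ * Real.sqrt 𝔐 / (1 - γ)^2 * ‖μ₁ - μ₂‖ := by
        rw [mul_one]
        have e1 : (1/(1-γ)) * (γ * (Real.sqrt 𝔐 * ‖μ₁ - μ₂‖)) * (1/(1-γ))
            = γ * Real.sqrt 𝔐 * ‖μ₁ - μ₂‖ / (1-γ)^2 := by
          field_simp
        have e2 : 3 * γ * Real.sqrt 𝔐 / (1 - γ)^2 * ‖μ₁ - μ₂‖
            = 3 * (γ * Real.sqrt 𝔐 * ‖μ₁ - μ₂‖) / (1-γ)^2 := by ring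
        rw [e1, e2]
        exact (div_le_div_iff_of_pos_right (by positivity)).mpr
          (by nlinarith [mul_nonneg (mul_nonneg hγ0.le hm0) hδ0])
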